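/- There exist varieties V and W of the same type with trivial intersection V ∩ W such that the Mal'tsev product V ∘ W is not a variety. Concretely, let V be the variety of all commutative groupoids and W = LZ the variety of left-zero bands (groupoids satisfying x·y = x), so V ∩ LZ is trivial. Let A = {0,1,2,3} be the groupoid with multiplication 0·y = 0 for all y; 1·0 = 0, 1·1 = 1, 1·2 = 0, 1·3 = 0; 2·y = 2 for all y; 3·0 = 2, 3·1 = 3, 3·2 = 2, 3·3 = 3. Then A belongs to V ∘ LZ (its LZ-replica congruence has the classes {0,1} and {2,3}, which are semilattices), but the quotient B = A/θ by the congruence θ with classes {0,2}, {1}, {3} does not belong to V ∘ LZ. Hence V ∘ LZ is not closed under homomorphic images and is not a variety. -/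

import Mathlib

structure Signature where
  symbols : Type
  arity : symbols → ℕ

structure Alg (S : Signature) where
  carrier : Type
  op : ∀ ω : S.symbols, (Fin (S.arity ω) → carrier) → carrier
  nonempty : Nonempty carrier

inductive Term (S : Signature) (X : Type) : Type
  | var : X → Term S X
  | app : ∀ ω : S.symbols, (Fin (S.arity ω) → Term S X) → Term S X

def Term.eval {S : Signature} {X : Type} (A : Alg S) (env : X → A.carrier) :
    Term S X → A.carrier
  | .var x => env x
  | .app ω ts => A.op ω fun i => (ts i).eval A env

/-- The algebra `A` satisfies the identity `u = v`. -/
def Alg.sat {S : Signature} (A : Alg S) {X : Type} (u v : Term S X) : Prop :=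
  ∀ env : X → A.carrier, u.eval A env = v.eval A env

/-- An identity: a pair of terms in the countably many variables `x₀, x₁, …`. -/
abbrev Ident (S : Signature) := Term S ℕ × Term S ℕ

/-- `A` lies in the variety axiomatized by the set of identities `E`. -/
def Alg.Models {S : Signature} (A : Alg S) (E : Set (Ident S)) : Prop :=
  ∀ e ∈ E, A.sat e.1 e.2

/-- The identity `u = v` holds in the variety axiomatized by `E`. -/
def Conseq {S : Signature} (E : Set (Ident S)) {X : Type} (u v : Term S X) : Prop :=
  ∀ A : Alg S, A.Models E → A.sat u v

/-- `a` is an idempotent element of `A`. -/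
def Alg.IsIdem {S : Signature} (A : Alg S) (a : A.carrier) : Prop :=
  ∀ ω : S.symbols, A.op ω (fun _ => a) = a

/-- `B` is (the universe of) a subalgebra of `A`. -/
def Alg.IsSubuniverse {S : Signature} (A : Alg S) (B : Set A.carrier) : Prop :=
  ∀ ω (a : Fin (S.arity ω) → A.carrier), (∀ i, a i ∈ B) → A.op ω a ∈ B

/-- The subalgebra of `A` on a nonempty subuniverse `B`. -/
def Alg.subAlg {S : Signature} (A : Alg S) (B : Set A.carrier)
    (h : A.IsSubuniverse B) (hne : B.Nonempty) : Alg S where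
  carrier := B
  op ω a := ⟨A.op ω fun i => (a i : A.carrier), h ω _ fun i => (a i).2⟩
  nonempty := hne.to_subtype

/-- A congruence of `A`: an equivalence relation compatible with all operations. -/
structure Congruence {S : Signature} (A : Alg S) where
  rel : A.carrier → A.carrier → Prop
  iseqv : Equivalence rel
  compat : ∀ ω (a b : Fin (S.arity ω) → A.carrier),
    (∀ i, rel (a i) (b i)) → rel (A.op ω a) (A.op ω b)

def Congruence.setoid {S : Signature} {A : Alg S} (θ : Congruence A) :
    Setoid A.carrier := ⟨θ.rel, θ.iseqv⟩

/-- The quotient algebra `A/θ`. -/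
noncomputable def Alg.quot {S : Signature} (A : Alg S) (θ : Congruence A) : Alg S where
  carrier := Quotient θ.setoid
  op ω q := Quotient.mk θ.setoid (A.op ω fun i => (q i).out)
  nonempty := A.nonempty.map (Quotient.mk θ.setoid)

/-- Membership in the Mal'tsev product of the varieties axiomatized by `V` and `W`:
`A` has a congruence `θ` with `A/θ` in (the variety of) `W` such that every
`θ`-class which is a subalgebra of `A` is an algebra in (the variety of) `V`. -/
def InMaltsev {S : Signature} (V W : Set (Ident S)) (A : Alg S) : Prop :=
  ∃ θ : Congruence A, (A.quot θ).Models W ∧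
    ∀ a : A.carrier, ∀ h : A.IsSubuniverse {b | θ.rel a b},
      (A.subAlg {b | θ.rel a b} h ⟨a, θ.iseqv.refl a⟩).Models V

/-- A class of algebras is a variety iff it is axiomatized by some set of identities. -/
def IsVarietyClass {S : Signature} (K : Alg S → Prop) : Prop :=
  ∃ E : Set (Ident S), ∀ A : Alg S, K A ↔ A.Models E

/-- The type of groupoids: a single binary operation symbol. -/
abbrev Sig2 : Signature := ⟨Unit, fun _ => 2⟩

/-- The binary operation on terms. -/
def mulT {X : Type} (u v : Term Sig2 X) : Term Sig2 X :=
  Term.app () ![u, v]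

/-- The variety of commutative groupoids: `x·y = y·x`. -/
def CommSet : Set (Ident Sig2) :=
  {(mulT (Term.var 0) (Term.var 1), mulT (Term.var 1) (Term.var 0))}

/-- The variety `LZ` of left-zero bands: `x·y = x`. -/
def LZSet : Set (Ident Sig2) :=
  {(mulT (Term.var 0) (Term.var 1), Term.var 0)}

/-- The multiplication table of the groupoid `A` on `{0,1,2,3}`. -/
def mulA : Fin 4 → Fin 4 → Fin 4 :=
  ![![0, 0, 0, 0], ![0, 1, 0, 0], ![2, 2, 2, 2], ![2, 3, 2, 3]]

/-- The groupoid `A`. -/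
abbrev AlgA : Alg Sig2 :=
  ⟨Fin 4, fun _ a => mulA (a 0) (a 1), ⟨0⟩⟩

/-- The partition `{0,2}, {1}, {3}` of `A`, coded by a map to `Fin 3`. -/
def clsA : Fin 4 → Fin 3 := ![0, 1, 0, 2]

/-- The congruence `θ` of `A` with the classes `{0,2}, {1}, {3}`. -/
def thetaA : Congruence AlgA where
  rel a b := clsA a = clsA b
  iseqv := ⟨fun _ => rfl, Eq.symm, Eq.trans⟩
  compat := by decide

/- ===== Auxiliary lemmas ===== -/

lemma eval_mulT {X : Type} (A : Alg Sig2) (env : X → A.carrier) (u v : Term Sig2 X) :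
    (mulT u v).eval A env = A.op () ![u.eval A env, v.eval A env] := by
  show A.op () (fun i => ((![u, v]) i).eval A env) = _
  congr 1
  funext i
  fin_cases i <;> rfl

lemma models_comm_iff (A : Alg Sig2) :
    A.Models CommSet ↔ ∀ x y : A.carrier, A.op () ![x, y] = A.op () ![y, x] := by
  constructor
  · intro h x y
    have := h _ rfl (fun n => if n = 0 then x else y)
    rw [eval_mulT, eval_mulT] at this
    simpa [Term.eval] using this
  · intro h e he env
    simp only [CommSet, Set.mem_singleton_iff] at he
    subst he
    show (mulT (Term.var 0) (Term.var 1)).eval A env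
        = (mulT (Term.var 1) (Term.var 0)).eval A env
    rw [eval_mulT, eval_mulT]
    exact h _ _

lemma models_lz_iff (A : Alg Sig2) :
    A.Models LZSet ↔ ∀ x y : A.carrier, A.op () ![x, y] = x := by
  constructor
  · intro h x y
    have := h _ rfl (fun n => if n = 0 then x else y)
    rw [eval_mulT] at this
    simpa [Term.eval] using this
  · intro h e he env
    simp only [LZSet, Set.mem_singleton_iff] at he
    subst he
    show (mulT (Term.var 0) (Term.var 1)).eval A env = (Term.var 0).eval A env
    rw [eval_mulT]
    exact h _ _

lemma quot_op {S : Signature} (A : Alg S) (θ : Congruence A) (ω : S.symbols)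
    (a : Fin (S.arity ω) → A.carrier) :
    (A.quot θ).op ω (fun i => Quotient.mk θ.setoid (a i))
      = Quotient.mk θ.setoid (A.op ω a) := by
  apply Quotient.sound
  apply θ.compat
  intro i
  exact @Quotient.mk_out _ θ.setoid (a i)

lemma quot_op2 (A : Alg Sig2) (θ : Congruence A) (x y : A.carrier) :
    (A.quot θ).op () ![Quotient.mk θ.setoid x, Quotient.mk θ.setoid y]
      = Quotient.mk θ.setoid (A.op () ![x, y]) := by
  have h : (![Quotient.mk θ.setoid x, Quotient.mk θ.setoid y])
      = fun i => Quotient.mk θ.setoid ((![x, y]) i) := by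
    funext i; fin_cases i <;> rfl
  exact (congrArg ((A.quot θ).op ()) h).trans (quot_op A θ () ![x, y])

lemma opA (x y : Fin 4) : AlgA.op () ![x, y] = mulA x y := by
  show mulA ((![x, y]) 0) ((![x, y]) 1) = mulA x y
  simp

lemma quot_eval {S : Signature} (A : Alg S) (θ : Congruence A) {X : Type}
    (env : X → A.carrier) (t : Term S X) :
    t.eval (A.quot θ) (fun x => Quotient.mk θ.setoid (env x))
      = Quotient.mk θ.setoid (t.eval A env) := by
  induction t with
  | var x => rfl
  | app ω ts ih =>
    show (A.quot θ).op ω (fun i => (ts i).eval (A.quot θ) _) = _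
    have h : (fun i => (ts i).eval (A.quot θ) (fun x => Quotient.mk θ.setoid (env x)))
        = fun i => Quotient.mk θ.setoid ((ts i).eval A env) := funext fun i => ih i
    rw [h, quot_op]
    rfl

lemma models_quot {S : Signature} (A : Alg S) (θ : Congruence A)
    (E : Set (Ident S)) (h : A.Models E) : (A.quot θ).Models E := by
  intro e he env
  have henv : env = fun x => Quotient.mk θ.setoid (env x).out :=
    funext fun x => (Quotient.out_eq _).symm
  rw [henv, quot_eval, quot_eval, h e he]

/-- The congruence of `AlgA` with classes `{0,1}` and `{2,3}`. -/
def phiA : Congruence AlgA where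
  rel a b := (![0, 0, 1, 1] : Fin 4 → Fin 2) a = (![0, 0, 1, 1] : Fin 4 → Fin 2) b
  iseqv := ⟨fun _ => rfl, Eq.symm, Eq.trans⟩
  compat := by decide

lemma phiA_mul (a b : Fin 4) : phiA.rel (mulA a b) a := by
  revert a b
  show ∀ a b : Fin 4,
    (![0, 0, 1, 1] : Fin 4 → Fin 2) (mulA a b) = (![0, 0, 1, 1] : Fin 4 → Fin 2) a
  decide

lemma phiA_comm : ∀ a x y : Fin 4, phiA.rel a x → phiA.rel a y → mulA x y = mulA y x := by
  show ∀ a x y : Fin 4,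
    (![0, 0, 1, 1] : Fin 4 → Fin 2) a = (![0, 0, 1, 1] : Fin 4 → Fin 2) x →
    (![0, 0, 1, 1] : Fin 4 → Fin 2) a = (![0, 0, 1, 1] : Fin 4 → Fin 2) y →
    mulA x y = mulA y x
  decide

lemma algA_in : InMaltsev CommSet LZSet AlgA := by
  refine ⟨phiA, ?_, ?_⟩
  · rw [models_lz_iff]
    intro x y
    rw [← Quotient.out_eq x, ← Quotient.out_eq y, quot_op2, opA]
    exact Quotient.sound (phiA_mul _ _)
  · intro a h
    rw [models_comm_iff]
    rintro ⟨x, hx⟩ ⟨y, hy⟩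
    apply Subtype.ext
    show AlgA.op () (fun i => ((![(⟨x, hx⟩ : {b | phiA.rel a b}), ⟨y, hy⟩]) i : Fin 4))
        = AlgA.op () (fun i => ((![(⟨y, hy⟩ : {b | phiA.rel a b}), ⟨x, hx⟩]) i : Fin 4))
    have h1 : (fun i => ((![(⟨x, hx⟩ : {b | phiA.rel a b}), ⟨y, hy⟩]) i : Fin 4)) = ![x, y] := by
      funext i; fin_cases i <;> rfl
    have h2 : (fun i => ((![(⟨y, hy⟩ : {b | phiA.rel a b}), ⟨x, hx⟩]) i : Fin 4)) = ![y, x] := by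
      funext i; fin_cases i <;> rfl
    rw [h1, h2, opA, opA]
    exact phiA_comm a x y hx hy

lemma quotA_not_in : ¬ InMaltsev CommSet LZSet (AlgA.quot thetaA) := by
  rintro ⟨θ', hW, hV⟩
  have key : ∀ x y : (AlgA.quot thetaA).carrier,
      θ'.rel ((AlgA.quot thetaA).op () ![x, y]) x := by
    intro x y
    have h := (models_lz_iff _).mp hW (Quotient.mk θ'.setoid x) (Quotient.mk θ'.setoid y)
    rw [quot_op2] at h
    exact Quotient.exact h
  have e20 : (Quotient.mk thetaA.setoid 2 : (AlgA.quot thetaA).carrier)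
      = Quotient.mk thetaA.setoid 0 :=
    Quotient.sound (show clsA 2 = clsA 0 by decide)
  have h13 : (AlgA.quot thetaA).op () ![Quotient.mk thetaA.setoid 1, Quotient.mk thetaA.setoid 3]
      = Quotient.mk thetaA.setoid 0 := by
    rw [quot_op2, opA]; exact congrArg _ (by decide)
  have h31 : (AlgA.quot thetaA).op () ![Quotient.mk thetaA.setoid 3, Quotient.mk thetaA.setoid 1]
      = Quotient.mk thetaA.setoid 3 := by
    rw [quot_op2, opA]; exact congrArg _ (by decide)
  have h30 : (AlgA.quot thetaA).op () ![Quotient.mk thetaA.setoid 3, Quotient.mk thetaA.setoid 0]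
      = Quotient.mk thetaA.setoid 0 := by rw [quot_op2, opA]; exact e20
  have h1 : θ'.rel (Quotient.mk thetaA.setoid 0) (Quotient.mk thetaA.setoid 1) := by
    have := key (Quotient.mk thetaA.setoid 1) (Quotient.mk thetaA.setoid 3)
    rwa [h13] at this
  have h3 : θ'.rel (Quotient.mk thetaA.setoid 0) (Quotient.mk thetaA.setoid 3) := by
    have := key (Quotient.mk thetaA.setoid 3) (Quotient.mk thetaA.setoid 0)
    rwa [h30] at this
  have hall : ∀ b : (AlgA.quot thetaA).carrier, θ'.rel (Quotient.mk thetaA.setoid 0) b := by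
    intro b
    obtain ⟨c, rfl⟩ := Quotient.exists_rep b
    fin_cases c
    · exact θ'.iseqv.refl _
    · exact h1
    · show θ'.rel (Quotient.mk thetaA.setoid 0) (Quotient.mk thetaA.setoid 2)
      rw [e20]
      exact θ'.iseqv.refl _
    · exact h3
  have hsub : (AlgA.quot thetaA).IsSubuniverse {b | θ'.rel (Quotient.mk thetaA.setoid 0) b} :=
    fun ω a _ => hall _
  have hcomm := (models_comm_iff _).mp (hV (Quotient.mk thetaA.setoid 0) hsub)
    ⟨Quotient.mk thetaA.setoid 1, h1⟩ ⟨Quotient.mk thetaA.setoid 3, h3⟩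
  have hval := congrArg Subtype.val hcomm
  have k1 : (fun i => ((![(⟨Quotient.mk thetaA.setoid 1, h1⟩ :
        {b | θ'.rel (Quotient.mk thetaA.setoid 0) b}), ⟨Quotient.mk thetaA.setoid 3, h3⟩]) i
        : (AlgA.quot thetaA).carrier))
      = ![Quotient.mk thetaA.setoid 1, Quotient.mk thetaA.setoid 3] := by
    funext i; fin_cases i <;> rfl
  have k2 : (fun i => ((![(⟨Quotient.mk thetaA.setoid 3, h3⟩ :
        {b | θ'.rel (Quotient.mk thetaA.setoid 0) b}), ⟨Quotient.mk thetaA.setoid 1, h1⟩]) i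
        : (AlgA.quot thetaA).carrier))
      = ![Quotient.mk thetaA.setoid 3, Quotient.mk thetaA.setoid 1] := by
    funext i; fin_cases i <;> rfl
  have hfinal : (AlgA.quot thetaA).op ()
        ![Quotient.mk thetaA.setoid 1, Quotient.mk thetaA.setoid 3]
      = (AlgA.quot thetaA).op ()
        ![Quotient.mk thetaA.setoid 3, Quotient.mk thetaA.setoid 1] := by
    exact (congrArg ((AlgA.quot thetaA).op ()) k1).symm.trans (hval.trans (congrArg ((AlgA.quot thetaA).op ()) k2))
  rw [h13, h31] at hfinal
  exact (show clsA 0 ≠ clsA 3 by decide) (Quotient.exact hfinal)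
/-- There are varieties with trivial intersection whose
Mal'tsev product is not a variety: for `V` the variety of commutative groupoids
and `LZ` the variety of left-zero bands, `V ∩ LZ` is trivial, the groupoid `A`
above belongs to `V ∘ LZ`, yet its quotient `B = A/θ` by the congruence `θ` with
classes `{0,2}, {1}, {3}` does not; hence `V ∘ LZ` is not closed under
homomorphic images and is not a variety. -/
theorem stmt_19 :
    (∀ B : Alg Sig2, B.Models CommSet → B.Models LZSet →
      Subsingleton B.carrier) ∧
    InMaltsev CommSet LZSet AlgA ∧
    ¬ InMaltsev CommSet LZSet (AlgA.quot thetaA) ∧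
    ¬ IsVarietyClass (InMaltsev CommSet LZSet) := by
  refine ⟨?_, algA_in, quotA_not_in, ?_⟩
  · intro B hc hl
    constructor
    intro a b
    have h1 := (models_comm_iff B).mp hc a b
    have h2 := (models_lz_iff B).mp hl a b
    have h3 := (models_lz_iff B).mp hl b a
    rw [h2, h3] at h1
    exact h1
  · rintro ⟨E, hE⟩
    have hA : AlgA.Models E := (hE AlgA).mp algA_in
    exact quotA_not_in ((hE _).mpr (models_quot AlgA thetaA E hA))
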